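/- Let a be a real number with 0 ≤ a ≤ 1 and a ≠ 1/2, let n be a natural number, let π be a probability vector on {0,1}^n with s = πᵀπ < 1, write C = C_a(n) and c = ((a² + (1−a)²)/(2a−1)²)^n. Then the loss L = Tr( C⁻¹ · diag(Cπ) · (C⁻¹)ᵀ − π πᵀ ) / Tr( diag(π) − π πᵀ ) satisfies L = (c − s)/(1 − s), and moreover (c − 2^(−n))/(1 − 2^(−n)) ≤ L. -/

import Mathlib

open Matrix

/-- `Cmat a b n` is the `2^n × 2^n` real matrix indexed by bit strings `x, y ∈ {0,1}^n`
whose `(x, y)` entry is `a ^ (n - d) * b ^ d`, where `d` is the Hamming distance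
between `x` and `y`. -/
def Cmat (a b : ℝ) (n : ℕ) : Matrix (Fin n → Fin 2) (Fin n → Fin 2) ℝ :=
  Matrix.of fun x y => a ^ (n - hammingDist x y) * b ^ hammingDist x y

/-- `CmatB a n` abbreviates `Cmat a (1 - a) n`. -/
def CmatB (a : ℝ) (n : ℕ) : Matrix (Fin n → Fin 2) (Fin n → Fin 2) ℝ :=
  Cmat a (1 - a) n

open Finset in
theorem Cmat_apply (n : ℕ) (a b : ℝ) (x y : Fin n → Fin 2) :
    Cmat a b n x y = ∏ i, if x i = y i then a else b := by
  show a ^ (n - hammingDist x y) * b ^ hammingDist x y = _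
  rw [Finset.prod_ite, Finset.prod_const, Finset.prod_const]
  have hd : hammingDist x y = #(filter (fun i => ¬ x i = y i) univ) := by
    rw [hammingDist]
  have := Finset.card_filter_add_card_filter_not
    (s := (Finset.univ : Finset (Fin n))) (p := fun i => x i = y i)
  simp only [Finset.card_univ, Fintype.card_fin] at this
  rw [hd]
  congr 2
  omega

theorem sum_two (A B : ℝ) (v : Fin 2) : ∑ t : Fin 2, (if t = v then A else B) = A + B := by
  fin_cases v <;> simp [Fin.sum_univ_two] <;> ring

theorem two_two (a b c d : ℝ) (u v : Fin 2) :
    (∑ t : Fin 2, (if u = t then a else b) * (if t = v then c else d))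
      = if u = v then a*c + b*d else a*d + b*c := by
  fin_cases u <;> fin_cases v <;> simp [Fin.sum_univ_two] <;> ring

theorem Cmat_mul (n : ℕ) (a b c d : ℝ) :
    Cmat a b n * Cmat c d n = Cmat (a*c + b*d) (a*d + b*c) n := by
  ext x z
  rw [Matrix.mul_apply, Cmat_apply]
  simp only [Cmat_apply]
  calc ∑ y : Fin n → Fin 2, ((∏ i, if x i = y i then a else b) * ∏ i, if y i = z i then c else d)
      = ∑ y : Fin n → Fin 2, ∏ i, ((if x i = y i then a else b) * (if y i = z i then c else d)) :=
        Finset.sum_congr rfl fun y _ => Finset.prod_mul_distrib.symm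
    _ = ∏ i, ∑ t : Fin 2, ((if x i = t then a else b) * (if t = z i then c else d)) :=
        (Fintype.prod_sum fun i t => (if x i = t then a else b) * (if t = z i then c else d)).symm
    _ = ∏ i, if x i = z i then a*c + b*d else a*d + b*c :=
        Finset.prod_congr rfl fun i _ => two_two a b c d (x i) (z i)

theorem Cmat_one (n : ℕ) : Cmat 1 0 n = 1 := by
  ext x y
  rw [Cmat_apply]
  rcases eq_or_ne x y with h | h
  · subst h; simp [Matrix.one_apply]
  · rw [Matrix.one_apply_ne h]
    obtain ⟨i, hi⟩ := Function.ne_iff.mp h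
    exact Finset.prod_eq_zero (Finset.mem_univ i) (if_neg hi)

theorem sum_col (n : ℕ) (a b : ℝ) (y : Fin n → Fin 2) :
    ∑ x : Fin n → Fin 2, Cmat a b n x y = (a + b) ^ n := by
  simp only [Cmat_apply]
  rw [← Fintype.prod_sum fun i t => if t = y i then a else b]
  simp only [sum_two, Finset.prod_const, Finset.card_univ, Fintype.card_fin]

theorem sum_sq_col (n : ℕ) (a b : ℝ) (y : Fin n → Fin 2) :
    ∑ x : Fin n → Fin 2, Cmat a b n x y * Cmat a b n x y = (a * a + b * b) ^ n := by
  have h : ∀ x : Fin n → Fin 2, Cmat a b n x y * Cmat a b n x y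
      = ∏ i, if x i = y i then a * a else b * b := by
    intro x
    rw [Cmat_apply, ← Finset.prod_mul_distrib]
    exact Finset.prod_congr rfl fun i _ => by split <;> ring
  simp only [h]
  rw [← Fintype.prod_sum fun i t => if t = y i then a * a else b * b]
  simp only [sum_two, Finset.prod_const, Finset.card_univ, Fintype.card_fin]

theorem trace_sandwich (n : ℕ) (D : Matrix (Fin n → Fin 2) (Fin n → Fin 2) ℝ)
    (v : (Fin n → Fin 2) → ℝ) :
    Matrix.trace (D * Matrix.diagonal v * Dᵀ)
      = ∑ y, v y * ∑ x, D x y * D x y := by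
  have key : ∀ x, (D * Matrix.diagonal v * Dᵀ) x x = ∑ y, v y * (D x y * D x y) := by
    intro x
    rw [Matrix.mul_apply]
    exact Finset.sum_congr rfl fun y _ => by
      rw [Matrix.mul_diagonal, Matrix.transpose_apply]; ring
  rw [Matrix.trace]
  simp only [Matrix.diag_apply, key]
  rw [Finset.sum_comm]
  exact Finset.sum_congr rfl fun y _ => (Finset.mul_sum _ _ _).symm

theorem loss_formula_and_lower_bound (a : ℝ) (ha0 : 0 ≤ a) (ha1 : a ≤ 1) (ha : a ≠ 1 / 2)
    (n : ℕ) (π : (Fin n → Fin 2) → ℝ) (hπ : ∀ x, 0 ≤ π x) (hsum : ∑ x, π x = 1)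
    (hs : ∑ x, π x ^ 2 < 1) :
    Matrix.trace
          ((CmatB a n)⁻¹ * Matrix.diagonal ((CmatB a n).mulVec π) * ((CmatB a n)⁻¹)ᵀ
            - Matrix.vecMulVec π π)
        / Matrix.trace (Matrix.diagonal π - Matrix.vecMulVec π π)
      = (((a ^ 2 + (1 - a) ^ 2) / (2 * a - 1) ^ 2) ^ n - ∑ x, π x ^ 2)
          / (1 - ∑ x, π x ^ 2) ∧
    (((a ^ 2 + (1 - a) ^ 2) / (2 * a - 1) ^ 2) ^ n - (1 / 2 ^ n)) / (1 - 1 / 2 ^ n)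
      ≤ Matrix.trace
            ((CmatB a n)⁻¹ * Matrix.diagonal ((CmatB a n).mulVec π) * ((CmatB a n)⁻¹)ᵀ
              - Matrix.vecMulVec π π)
          / Matrix.trace (Matrix.diagonal π - Matrix.vecMulVec π π) := by
  classical
  have h2a : (2 * a - 1) ≠ 0 := fun h => ha (by linarith)
  set s : ℝ := ∑ x, π x ^ 2 with hsdef
  set c : ℝ := ((a ^ 2 + (1 - a) ^ 2) / (2 * a - 1) ^ 2) ^ n with hcdef
  set a' : ℝ := a / (2 * a - 1) with ha'
  set b' : ℝ := -(1 - a) / (2 * a - 1) with hb'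
  have hCD : CmatB a n * Cmat a' b' n = 1 := by
    rw [CmatB, Cmat_mul]
    have h1 : a * a' + (1 - a) * b' = 1 := by
      rw [ha', hb', mul_div_assoc', mul_div_assoc', ← add_div, div_eq_one_iff_eq h2a]; ring
    have h2 : a * b' + (1 - a) * a' = 0 := by rw [ha', hb']; field_simp; ring
    rw [h1, h2, Cmat_one]
  have hinv : (CmatB a n)⁻¹ = Cmat a' b' n := Matrix.inv_eq_right_inv hCD
  have hsumv : ∑ y, (CmatB a n).mulVec π y = 1 := by
    simp only [Matrix.mulVec, dotProduct]
    rw [Finset.sum_comm]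
    calc ∑ z, ∑ y, CmatB a n y z * π z
        = ∑ z, (a + (1 - a)) ^ n * π z := by
          refine Finset.sum_congr rfl fun z _ => ?_
          rw [← Finset.sum_mul, CmatB, sum_col]
      _ = 1 := by simp [hsum]
  have hbase : a' * a' + b' * b' = (a ^ 2 + (1 - a) ^ 2) / (2 * a - 1) ^ 2 := by
    rw [ha', hb']; field_simp
  have htr1 : Matrix.trace
      ((CmatB a n)⁻¹ * Matrix.diagonal ((CmatB a n).mulVec π) * ((CmatB a n)⁻¹)ᵀ) = c := by
    rw [hinv, trace_sandwich]
    have : ∀ y, ∑ x, Cmat a' b' n x y * Cmat a' b' n x y = c := by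
      intro y; rw [sum_sq_col, hbase, hcdef]
    simp only [this]
    rw [← Finset.sum_mul, hsumv, one_mul]
  have htrvv : Matrix.trace (Matrix.vecMulVec π π) = s := by
    rw [Matrix.trace]
    simp only [Matrix.diag_apply, Matrix.vecMulVec_apply, hsdef]
    exact Finset.sum_congr rfl fun x _ => (sq (π x)).symm
  have hnum : Matrix.trace
      ((CmatB a n)⁻¹ * Matrix.diagonal ((CmatB a n).mulVec π) * ((CmatB a n)⁻¹)ᵀ
        - Matrix.vecMulVec π π) = c - s := by
    rw [Matrix.trace_sub, htr1, htrvv]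
  have hden : Matrix.trace (Matrix.diagonal π - Matrix.vecMulVec π π) = 1 - s := by
    rw [Matrix.trace_sub, Matrix.trace_diagonal, hsum, htrvv]
  have heq : Matrix.trace
      ((CmatB a n)⁻¹ * Matrix.diagonal ((CmatB a n).mulVec π) * ((CmatB a n)⁻¹)ᵀ
        - Matrix.vecMulVec π π)
      / Matrix.trace (Matrix.diagonal π - Matrix.vecMulVec π π) = (c - s) / (1 - s) := by
    rw [hnum, hden]
  refine ⟨heq, ?_⟩
  rw [heq]
  -- lower bound
  have h2n : (0:ℝ) < 2 ^ n := by positivity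
  have hs2 : 1 / 2 ^ n ≤ s := by
    have hcs := sq_sum_le_card_mul_sum_sq (s := (Finset.univ : Finset (Fin n → Fin 2)))
      (f := π)
    rw [hsum] at hcs
    have hcard : ((Finset.univ : Finset (Fin n → Fin 2)).card : ℝ) = 2 ^ n := by
      simp [Finset.card_univ]
    rw [hcard] at hcs
    rw [div_le_iff₀ h2n]
    nlinarith
  have hc1 : 1 ≤ c := by
    have hb2 : (0:ℝ) < (2 * a - 1) ^ 2 := by positivity
    have : 1 ≤ (a ^ 2 + (1 - a) ^ 2) / (2 * a - 1) ^ 2 :=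
      (le_div_iff₀ hb2).mpr (by nlinarith)
    exact one_le_pow₀ this
  have h1s : 0 < 1 - s := by linarith
  have h1n : (0:ℝ) < 1 - 1 / 2 ^ n := by linarith
  rw [div_le_div_iff₀ h1n h1s]
  nlinarith [mul_nonneg (sub_nonneg.mpr hc1) (sub_nonneg.mpr hs2)]
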